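/- Suppose B(1,1) ≤ B̄ < Σ_{t=1}^K π_t·c_t, let k* ∈ {1,…,K−1} satisfy B(k*,1) ≤ B̄ < B(k*+1,1), let x* ∈ [c_{k*}/c_{k*+1}, 1] satisfy B(k*, x*) = B̄, and assume R(k*, x*) < 1. Let t* = max{k ∈ {1,…,K} : B̄ > Q(k,1)}, and let k̃ ∈ {1,…,k*} and x̃ ∈ [c_{k̃}/c_{k̃+1}, 1] satisfy R(k̃, x̃) = 1. Define q ∈ [0,1]^K by q_t = (c_t/c_{k̃})·x̃ for t ≤ k̃ and q_t = 1 for t > k̃, and define A by A_t = 1 for t ≤ t* and A_t = (1/√c_t)·(B̄ − Σ_{s=1}^{t*} π_s·c_s)/(Σ_{s=t*+1}^K π_s·√c_s) for t > t*. Then t* is well defined with k̃ ≤ t* < K, A is a monotone non-increasing budget-feasible allocation rule with Σ_{t=1}^K π_t·c_t·A_t = B̄, and (A, q) is an equilibrium pair. -/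

import Mathlib

open scoped Classical

/-- Case 2, `R(k*,x*) < 1`: with `t* = max{k ∈ {1,…,K} : B̄ > Q(k,1)}`,
the allocation rule equal to `1` up to `t*` and to
`(1/√c_t)·(B̄ − Σ_{s ≤ t*} π_s c_s)/(Σ_{s > t*} π_s √c_s)` above `t*`, together with the
adversary response built from `(k̃, x̃)` with `R(k̃,x̃) = 1`, is a monotone non-increasing
budget-feasible allocation rule spending exactly `B̄`, `t*` is well defined with
`k̃ ≤ t* < K`, and `(A, q)` is an equilibrium pair. Costs are indexed by `{1, …, K}`. -/

private lemma aux_mul_lt (Qv Rv Bb : ℝ) (hQ : 0 < Qv) (hB : 0 < Bb) (hR : Rv < 1)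
    (hE : Qv = Bb * Rv) : Qv < Bb := by nlinarith

private lemma aux_sqrt_lt_sq (x D : ℝ) (hx : 0 ≤ x) (h : Real.sqrt x < D) : x < D ^ 2 := by
  nlinarith [Real.sq_sqrt hx, Real.sqrt_nonneg x]

private lemma aux_amgm (s D a : ℝ) : 2 * s * (a * D) ≤ D ^ 2 + s * s * a ^ 2 := by
  nlinarith [sq_nonneg (D - s * a)]

set_option maxHeartbeats 1600000 in
theorem equilibrium_case_R_lt_one
    (K : ℕ) (hK : 2 ≤ K) (c π : ℕ → ℝ) (Q R B : ℕ → ℝ → ℝ) (Bbar : ℝ)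
    (hc : ∀ t ∈ Finset.Icc 1 K, 0 < c t)
    (hcmono : ∀ j ∈ Finset.Icc 1 (K - 1), c j < c (j + 1))
    (hπpos : ∀ t ∈ Finset.Icc 1 K, 0 < π t)
    (hπsum : ∑ t ∈ Finset.Icc 1 K, π t = 1)
    (hBbar_pos : 0 < Bbar)
    (hQ : ∀ k ∈ Finset.Icc 1 K, ∀ x ∈ Set.Ioc (0 : ℝ) 1,
      Q k x = (∑ t ∈ Finset.Icc 1 k, π t * c t)
        + ∑ t ∈ Finset.Icc (k + 1) K, π t * Real.sqrt (c t * c k / x))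
    (hR : ∀ k ∈ Finset.Icc 1 K, ∀ x ∈ Set.Ioc (0 : ℝ) 1,
      R k x = 2 * ((∑ t ∈ Finset.Icc 1 k, π t * c t * x / c k)
        + ∑ t ∈ Finset.Icc (k + 1) K, π t))
    (hB : ∀ k ∈ Finset.Icc 1 K, ∀ x ∈ Set.Ioc (0 : ℝ) 1,
      B k x = Q k x / R k x)
    (hBbar_lb : B 1 1 ≤ Bbar) (hBbar_ub : Bbar < ∑ t ∈ Finset.Icc 1 K, π t * c t)
    (kstar : ℕ) (hkstar : kstar ∈ Finset.Icc 1 (K - 1))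
    (hkstar_lb : B kstar 1 ≤ Bbar) (hkstar_ub : Bbar < B (kstar + 1) 1)
    (xstar : ℝ) (hxstar_lb : c kstar / c (kstar + 1) ≤ xstar) (hxstar_ub : xstar ≤ 1)
    (hxstar_eq : B kstar xstar = Bbar)
    (hRlt : R kstar xstar < 1)
    (tstar : ℕ)
    (htstar : tstar = Nat.findGreatest (fun k => 1 ≤ k ∧ Bbar > Q k 1) K)
    (ktilde : ℕ) (hktilde : ktilde ∈ Finset.Icc 1 kstar)
    (xtilde : ℝ) (hxtilde_lb : c ktilde / c (ktilde + 1) ≤ xtilde)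
    (hxtilde_ub : xtilde ≤ 1) (hxtilde_eq : R ktilde xtilde = 1)
    (q A : ℕ → ℝ)
    (hq_low : ∀ t, t ≤ ktilde → q t = (c t / c ktilde) * xtilde)
    (hq_high : ∀ t, ktilde < t → q t = 1)
    (hA_low : ∀ t, t ≤ tstar → A t = 1)
    (hA_high : ∀ t, tstar < t →
      A t = (1 / Real.sqrt (c t)) * ((Bbar - ∑ s ∈ Finset.Icc 1 tstar, π s * c s)
        / ∑ s ∈ Finset.Icc (tstar + 1) K, π s * Real.sqrt (c s))) :
    (tstar ∈ Finset.Icc 1 K ∧ Bbar > Q tstar 1 ∧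
      (∀ k ∈ Finset.Icc 1 K, Bbar > Q k 1 → k ≤ tstar) ∧
      ktilde ≤ tstar ∧ tstar < K) ∧
    (∀ t ∈ Finset.Icc 1 K, 0 < A t ∧ A t ≤ 1) ∧
    (∀ s ∈ Finset.Icc 1 K, ∀ t ∈ Finset.Icc 1 K, s ≤ t → A t ≤ A s) ∧
    (∑ t ∈ Finset.Icc 1 K, π t * c t * A t = Bbar) ∧
    (∀ t ∈ Finset.Icc 1 K, q t ∈ Set.Icc (0 : ℝ) 1) ∧
    (∀ A' : ℕ → ℝ, (∀ t ∈ Finset.Icc 1 K, 0 < A' t ∧ A' t ≤ 1) →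
      (∑ t ∈ Finset.Icc 1 K, π t * c t * A' t ≤ Bbar) →
      (∑ t ∈ Finset.Icc 1 K, π t * q t / A t) - (∑ t ∈ Finset.Icc 1 K, π t * q t) ^ 2
        ≤ (∑ t ∈ Finset.Icc 1 K, π t * q t / A' t)
          - (∑ t ∈ Finset.Icc 1 K, π t * q t) ^ 2) ∧
    (∀ q' : ℕ → ℝ, (∀ t ∈ Finset.Icc 1 K, q' t ∈ Set.Icc (0 : ℝ) 1) →
      (∑ t ∈ Finset.Icc 1 K, π t * q' t / A t) - (∑ t ∈ Finset.Icc 1 K, π t * q' t) ^ 2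
        ≤ (∑ t ∈ Finset.Icc 1 K, π t * q t / A t)
          - (∑ t ∈ Finset.Icc 1 K, π t * q t) ^ 2) := by
  classical
  simp only [Finset.mem_Icc] at hkstar hktilde
  obtain ⟨hks1, hks2⟩ := hkstar
  obtain ⟨hkt1, hkt2⟩ := hktilde
  have hcpos : ∀ t, 1 ≤ t → t ≤ K → 0 < c t := fun t h1 h2 => hc t (Finset.mem_Icc.2 ⟨h1, h2⟩)
  have hppos : ∀ t, 1 ≤ t → t ≤ K → 0 < π t := fun t h1 h2 => hπpos t (Finset.mem_Icc.2 ⟨h1, h2⟩)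
  have hcm : ∀ s t : ℕ, 1 ≤ s → s ≤ t → t ≤ K → c s ≤ c t := by
    intro s t h1 hst
    induction t, hst using Nat.le_induction with
    | base => intro _; exact le_refl _
    | succ n hn ih =>
      intro hnK
      have h2 : c n < c (n + 1) := hcmono n (Finset.mem_Icc.2 ⟨by omega, by omega⟩)
      have := ih (by omega)
      linarith
  have hksK : kstar ≤ K := by omega
  have hks1K : kstar + 1 ≤ K := by omega
  have hkstarmem : kstar ∈ Finset.Icc 1 K := Finset.mem_Icc.2 ⟨hks1, hksK⟩
  have hxstar_pos : 0 < xstar :=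
    lt_of_lt_of_le (div_pos (hcpos kstar hks1 hksK) (hcpos (kstar + 1) (by omega) hks1K)) hxstar_lb
  have hxstar_mem : xstar ∈ Set.Ioc (0 : ℝ) 1 := ⟨hxstar_pos, hxstar_ub⟩
  have hktK : ktilde ≤ K := by omega
  have hkt1K : ktilde + 1 ≤ K := by omega
  have hxtilde_pos : 0 < xtilde :=
    lt_of_lt_of_le (div_pos (hcpos ktilde hkt1 hktK) (hcpos (ktilde + 1) (by omega) hkt1K)) hxtilde_lb
  have hxtilde_mem : xtilde ∈ Set.Ioc (0 : ℝ) 1 := ⟨hxtilde_pos, hxtilde_ub⟩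
  have h1mem : (1 : ℝ) ∈ Set.Ioc (0 : ℝ) 1 := ⟨one_pos, le_refl 1⟩
  have hsum_pi_pos : ∀ a b : ℕ, 1 ≤ a → a ≤ b → b ≤ K → 0 < ∑ t ∈ Finset.Icc a b, π t := by
    intro a b h1 hab hbK
    refine Finset.sum_pos (fun i hi => ?_) (Finset.nonempty_Icc.2 hab)
    rw [Finset.mem_Icc] at hi
    exact hppos i (by omega) (by omega)
  have hsum_pc_pos : ∀ a b : ℕ, 1 ≤ a → a ≤ b → b ≤ K → 0 < ∑ t ∈ Finset.Icc a b, π t * c t := by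
    intro a b h1 hab hbK
    refine Finset.sum_pos (fun i hi => ?_) (Finset.nonempty_Icc.2 hab)
    rw [Finset.mem_Icc] at hi
    exact mul_pos (hppos i (by omega) (by omega)) (hcpos i (by omega) (by omega))
  have hRpos : 0 < R kstar xstar := by
    rw [hR kstar hkstarmem xstar hxstar_mem]
    have h1 : 0 ≤ ∑ t ∈ Finset.Icc 1 kstar, π t * c t * xstar / c kstar := by
      refine Finset.sum_nonneg (fun i hi => ?_)
      rw [Finset.mem_Icc] at hi
      have h3 := hppos i (by omega) (by omega)
      have h4 := hcpos i (by omega) (by omega)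
      have h5 := hcpos kstar hks1 hksK
      positivity
    have h2 : 0 < ∑ t ∈ Finset.Icc (kstar + 1) K, π t :=
      hsum_pi_pos (kstar + 1) K (by omega) (by omega) le_rfl
    linarith
  have hQspos : 0 < Q kstar xstar := by
    rw [hQ kstar hkstarmem xstar hxstar_mem]
    have h1 : 0 < ∑ t ∈ Finset.Icc 1 kstar, π t * c t := hsum_pc_pos 1 kstar le_rfl hks1 hksK
    have h2 : 0 ≤ ∑ t ∈ Finset.Icc (kstar + 1) K, π t * Real.sqrt (c t * c kstar / xstar) := by
      refine Finset.sum_nonneg (fun i hi => ?_)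
      rw [Finset.mem_Icc] at hi
      have h3 := hppos i (by omega) (by omega)
      positivity
    linarith
  have hQx_lt_Bbar : Q kstar xstar < Bbar := by
    have hBeq := hB kstar hkstarmem xstar hxstar_mem
    rw [hxstar_eq] at hBeq
    have hQeq : Q kstar xstar = Bbar * R kstar xstar := by
      rw [hBeq, div_mul_cancel₀ _ hRpos.ne']
    exact aux_mul_lt _ _ _ hQspos hBbar_pos hRlt hQeq
  have hQmono : ∀ k, 1 ≤ k → k ≤ K → ∀ x y : ℝ, 0 < x → x ≤ y → y ≤ 1 → Q k y ≤ Q k x := by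
    intro k h1 h2 x y hx hxy hy1
    have hkmem : k ∈ Finset.Icc 1 K := Finset.mem_Icc.2 ⟨h1, h2⟩
    rw [hQ k hkmem x ⟨hx, le_trans hxy hy1⟩, hQ k hkmem y ⟨lt_of_lt_of_le hx hxy, hy1⟩]
    have hterm : ∀ t ∈ Finset.Icc (k + 1) K,
        π t * Real.sqrt (c t * c k / y) ≤ π t * Real.sqrt (c t * c k / x) := by
      intro t ht
      rw [Finset.mem_Icc] at ht
      have hp := hppos t (by omega) (by omega)
      have hct := hcpos t (by omega) (by omega)
      have hck := hcpos k h1 h2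
      refine mul_le_mul_of_nonneg_left (Real.sqrt_le_sqrt ?_) hp.le
      exact div_le_div_of_nonneg_left (by positivity) hx hxy
    have := Finset.sum_le_sum hterm
    linarith
  have hQks1_lt : Q kstar 1 < Bbar :=
    lt_of_le_of_lt (hQmono kstar hks1 hksK xstar 1 hxstar_pos hxstar_ub le_rfl) hQx_lt_Bbar
  have hks_le_t : kstar ≤ tstar := by
    rw [htstar]
    exact Nat.le_findGreatest (P := fun k => 1 ≤ k ∧ Bbar > Q k 1) hksK ⟨hks1, hQks1_lt⟩
  have ht1 : 1 ≤ tstar := le_trans hks1 hks_le_t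
  have htK : tstar ≤ K := by rw [htstar]; exact Nat.findGreatest_le K
  have htP : 1 ≤ tstar ∧ Bbar > Q tstar 1 := by
    rw [htstar]
    exact Nat.findGreatest_spec (P := fun k => 1 ≤ k ∧ Bbar > Q k 1) hksK ⟨hks1, hQks1_lt⟩
  have hQK : Q K 1 = ∑ t ∈ Finset.Icc 1 K, π t * c t := by
    rw [hQ K (Finset.mem_Icc.2 ⟨by omega, le_rfl⟩) 1 h1mem]
    rw [Finset.Icc_eq_empty (by omega : ¬ K + 1 ≤ K), Finset.sum_empty, add_zero]
  have htltK : tstar < K := by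
    rcases lt_or_eq_of_le htK with h | h
    · exact h
    · exfalso; rw [h] at htP; rw [hQK] at htP; linarith [htP.2]
  have hmax : ∀ k ∈ Finset.Icc 1 K, Bbar > Q k 1 → k ≤ tstar := by
    intro k hk hQk
    rw [Finset.mem_Icc] at hk
    by_contra hlt
    push_neg at hlt
    have hng : ¬ (1 ≤ k ∧ Bbar > Q k 1) := by
      rw [htstar] at hlt
      exact Nat.findGreatest_is_greatest hlt hk.2
    exact hng ⟨hk.1, hQk⟩
  have hkt_le_t : ktilde ≤ tstar := le_trans hkt2 hks_le_t
  set S : ℝ := ∑ s ∈ Finset.Icc 1 tstar, π s * c s with hSdef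
  set T : ℝ := ∑ s ∈ Finset.Icc (tstar + 1) K, π s * Real.sqrt (c s) with hTdef
  have hTpos : 0 < T := by
    rw [hTdef]
    refine Finset.sum_pos (fun i hi => ?_) (Finset.nonempty_Icc.2 (by omega))
    rw [Finset.mem_Icc] at hi
    exact mul_pos (hppos i (by omega) (by omega)) (Real.sqrt_pos.2 (hcpos i (by omega) (by omega)))
  set Dv : ℝ := (Bbar - S) / T with hDvdef
  have hsplit : ∀ (f : ℕ → ℝ) (m : ℕ), m ≤ K →
      ∑ t ∈ Finset.Icc 1 K, f t = (∑ t ∈ Finset.Icc 1 m, f t) + ∑ t ∈ Finset.Icc (m + 1) K, f t := by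
    intro f m hm
    rw [show Finset.Icc 1 K = Finset.Ioc 0 K from Finset.Icc_add_one_left_eq_Ioc 0 K,
      show Finset.Icc 1 m = Finset.Ioc 0 m from Finset.Icc_add_one_left_eq_Ioc 0 m,
      show Finset.Icc (m + 1) K = Finset.Ioc m K from Finset.Icc_add_one_left_eq_Ioc m K]
    exact (Finset.sum_Ioc_consecutive _ (Nat.zero_le m) hm).symm
  have hQexp : ∀ k, 1 ≤ k → k ≤ K → ∀ x ∈ Set.Ioc (0 : ℝ) 1,
      Q k x = (∑ t ∈ Finset.Icc 1 k, π t * c t)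
        + Real.sqrt (c k / x) * ∑ t ∈ Finset.Icc (k + 1) K, π t * Real.sqrt (c t) := by
    intro k h1 h2 x hx
    rw [hQ k (Finset.mem_Icc.2 ⟨h1, h2⟩) x hx]
    congr 1
    rw [Finset.mul_sum]
    refine Finset.sum_congr rfl (fun t ht => ?_)
    rw [Finset.mem_Icc] at ht
    have hct : (0:ℝ) ≤ c t := (hcpos t (by omega) (by omega)).le
    rw [mul_div_assoc, Real.sqrt_mul hct]
    ring
  have hQt : Q tstar 1 = S + Real.sqrt (c tstar) * T := by
    rw [hQexp tstar ht1 htK 1 h1mem, div_one, hSdef, hTdef]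
  have hDgt : Real.sqrt (c tstar) < Dv := by
    rw [hDvdef, lt_div_iff₀ hTpos]
    have h := htP.2
    rw [hQt] at h
    linarith
  have hDpos : 0 < Dv := lt_of_le_of_lt (Real.sqrt_nonneg _) hDgt
  have hDsqpos : 0 < Dv ^ 2 := by positivity
  have hcts_lt : c tstar < Dv ^ 2 :=
    aux_sqrt_lt_sq _ _ (hcpos tstar ht1 htK).le hDgt
  have hQt1 : Q (tstar + 1) 1 = S + Real.sqrt (c (tstar + 1)) * T := by
    rw [hQexp (tstar + 1) (by omega) (by omega) 1 h1mem, div_one]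
    have hsplit1 : ∑ t ∈ Finset.Icc 1 (tstar + 1), π t * c t
        = S + π (tstar + 1) * c (tstar + 1) := by
      rw [hSdef]; exact Finset.sum_Icc_succ_top (by omega) _
    have hsplit2 : T = π (tstar + 1) * Real.sqrt (c (tstar + 1))
        + ∑ t ∈ Finset.Icc (tstar + 1 + 1) K, π t * Real.sqrt (c t) := by
      rw [hTdef, show Finset.Icc (tstar + 1) K = Finset.Ioc tstar K from Finset.Icc_add_one_left_eq_Ioc tstar K,
        show Finset.Icc (tstar + 1 + 1) K = Finset.Ioc (tstar + 1) K from
          Finset.Icc_add_one_left_eq_Ioc (tstar + 1) K,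
        ← Finset.sum_Ioc_consecutive _ (by omega : tstar ≤ tstar + 1) (by omega : tstar + 1 ≤ K),
        Nat.Ioc_succ_singleton, Finset.sum_singleton]
    have hcc : Real.sqrt (c (tstar + 1)) * Real.sqrt (c (tstar + 1)) = c (tstar + 1) :=
      Real.mul_self_sqrt (hcpos (tstar + 1) (by omega) (by omega)).le
    rw [hsplit1, hsplit2]
    linear_combination (-(π (tstar + 1))) * hcc
  have hBbar_le_Qt1 : Bbar ≤ Q (tstar + 1) 1 := by
    by_contra h
    push_neg at h
    have := hmax (tstar + 1) (Finset.mem_Icc.2 ⟨by omega, by omega⟩) h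
    omega
  have hDle : Dv ≤ Real.sqrt (c (tstar + 1)) := by
    rw [hDvdef, div_le_iff₀ hTpos]
    rw [hQt1] at hBbar_le_Qt1
    linarith
  have hAb : ∀ t, 1 ≤ t → t ≤ K → 0 < A t ∧ A t ≤ 1 := by
    intro t h1 h2
    by_cases htt : t ≤ tstar
    · rw [hA_low t htt]; exact ⟨one_pos, le_refl 1⟩
    · push_neg at htt
      rw [hA_high t htt]
      have hst : 0 < Real.sqrt (c t) := Real.sqrt_pos.2 (hcpos t h1 h2)
      have hle : Real.sqrt (c (tstar + 1)) ≤ Real.sqrt (c t) :=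
        Real.sqrt_le_sqrt (hcm (tstar + 1) t (by omega) (by omega) h2)
      constructor
      · positivity
      · rw [one_div, inv_mul_le_iff₀ hst, mul_one]
        exact le_trans hDle hle
  have hAmono : ∀ s, 1 ≤ s → s ≤ K → ∀ t, 1 ≤ t → t ≤ K → s ≤ t → A t ≤ A s := by
    intro s hs1 hs2 t ht1' ht2 hst
    by_cases htt : t ≤ tstar
    · rw [hA_low t htt, hA_low s (le_trans hst htt)]
    · push_neg at htt
      by_cases hss : s ≤ tstar
      · rw [hA_low s hss]
        exact (hAb t ht1' ht2).2
      · push_neg at hss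
        rw [hA_high t htt, hA_high s hss]
        have hsts : 0 < Real.sqrt (c s) := Real.sqrt_pos.2 (hcpos s hs1 hs2)
        have hle : Real.sqrt (c s) ≤ Real.sqrt (c t) := Real.sqrt_le_sqrt (hcm s t hs1 hst ht2)
        have h1 : (1:ℝ) / Real.sqrt (c t) ≤ 1 / Real.sqrt (c s) :=
          div_le_div_of_nonneg_left (by norm_num) hsts hle
        exact mul_le_mul_of_nonneg_right h1 hDpos.le
  have hbudget : ∑ t ∈ Finset.Icc 1 K, π t * c t * A t = Bbar := by
    rw [hsplit (fun t => π t * c t * A t) tstar htK]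
    have e1 : ∑ t ∈ Finset.Icc 1 tstar, π t * c t * A t = S := by
      rw [hSdef]
      refine Finset.sum_congr rfl (fun t ht => ?_)
      rw [Finset.mem_Icc] at ht
      rw [hA_low t ht.2, mul_one]
    have e2 : ∑ t ∈ Finset.Icc (tstar + 1) K, π t * c t * A t = Dv * T := by
      rw [hTdef, Finset.mul_sum]
      refine Finset.sum_congr rfl (fun t ht => ?_)
      rw [Finset.mem_Icc] at ht
      rw [hA_high t (by omega),
        show π t * c t * (1 / Real.sqrt (c t) * Dv)
          = Dv * (π t * (c t / Real.sqrt (c t))) from by ring,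
        Real.div_sqrt]
    rw [e1, e2, hDvdef, div_mul_cancel₀ _ hTpos.ne']
    ring
  have hqb : ∀ t, 1 ≤ t → t ≤ K → 0 ≤ q t ∧ q t ≤ 1 := by
    intro t h1 h2
    by_cases htk : t ≤ ktilde
    · rw [hq_low t htk]
      have hct : (0:ℝ) < c t := hcpos t h1 h2
      have hck : (0:ℝ) < c ktilde := hcpos ktilde hkt1 hktK
      have hle : c t ≤ c ktilde := hcm t ktilde h1 htk hktK
      constructor
      · positivity
      · have h3 : c t / c ktilde ≤ 1 := (div_le_one hck).2 hle
        exact mul_le_one₀ h3 hxtilde_pos.le hxtilde_ub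
    · push_neg at htk
      rw [hq_high t htk]
      norm_num
  set lam : ℝ := 1 / Dv ^ 2 with hlamdef
  have hlampos : 0 < lam := by positivity
  have hmaster : c ktilde ≤ xtilde * Dv ^ 2 := by
    by_cases hklt : ktilde < tstar
    · have h1 : c ktilde ≤ xtilde * c (ktilde + 1) := by
        have hck1 : (0:ℝ) < c (ktilde + 1) := hcpos (ktilde + 1) (by omega) hkt1K
        rw [div_le_iff₀ hck1] at hxtilde_lb
        linarith
      have h2 : c (ktilde + 1) ≤ c tstar := hcm (ktilde + 1) tstar (by omega) (by omega) htK
      calc c ktilde ≤ xtilde * c (ktilde + 1) := h1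
        _ ≤ xtilde * Dv ^ 2 :=
          mul_le_mul_of_nonneg_left (by linarith) hxtilde_pos.le
    · have hkteq : ktilde = tstar := by omega
      have hkseq : kstar = ktilde := by omega
      rw [← hkseq] at hxtilde_eq hkteq ⊢
      have hxlt : xstar ≤ xtilde := by
        have h1 := hR kstar hkstarmem xstar hxstar_mem
        have h2 := hR kstar hkstarmem xtilde hxtilde_mem
        rw [hxtilde_eq] at h2
        have hck : (0:ℝ) < c kstar := hcpos kstar hks1 hksK
        have hW : 0 < ∑ t ∈ Finset.Icc 1 kstar, π t * c t := hsum_pc_pos 1 kstar le_rfl hks1 hksK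
        have e : ∀ x : ℝ, ∑ t ∈ Finset.Icc 1 kstar, π t * c t * x / c kstar
            = (∑ t ∈ Finset.Icc 1 kstar, π t * c t) * x / c kstar := by
          intro x
          rw [← Finset.sum_div, ← Finset.sum_mul]
        rw [e] at h1 h2
        have hRlt' := hRlt
        rw [h1] at hRlt'
        have hd : (∑ t ∈ Finset.Icc 1 kstar, π t * c t) * xstar / c kstar
            < (∑ t ∈ Finset.Icc 1 kstar, π t * c t) * xtilde / c kstar := by linarith
        have hd2 := (div_lt_div_iff_of_pos_right hck).mp hd
        exact le_of_lt ((mul_lt_mul_iff_right₀ hW).mp hd2)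
      have hQlt : Q kstar xtilde < Bbar :=
        lt_of_le_of_lt (hQmono kstar hks1 hksK xstar xtilde hxstar_pos hxlt hxtilde_ub) hQx_lt_Bbar
      have hQexp2 : Q kstar xtilde = S + Real.sqrt (c kstar / xtilde) * T := by
        rw [hQexp kstar hks1 hksK xtilde hxtilde_mem, hkteq, hSdef, hTdef]
      rw [hQexp2] at hQlt
      have hsq : Real.sqrt (c kstar / xtilde) < Dv := by
        rw [hDvdef, lt_div_iff₀ hTpos]; linarith
      have hnn : (0:ℝ) ≤ c kstar / xtilde := by
        have := hcpos kstar hks1 hksK; positivity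
      have h2 : c kstar / xtilde < Dv ^ 2 := aux_sqrt_lt_sq _ _ hnn hsq
      rw [div_lt_iff₀ hxtilde_pos] at h2
      linarith
  have hkey : ∀ t, 1 ≤ t → t ≤ tstar → lam * c t ≤ q t := by
    intro t h1 h2
    have htK' : t ≤ K := by omega
    have hct : (0:ℝ) < c t := hcpos t h1 htK'
    by_cases htk : t ≤ ktilde
    · rw [hq_low t htk]
      have hck : (0:ℝ) < c ktilde := hcpos ktilde hkt1 hktK
      rw [hlamdef, show (1:ℝ) / Dv ^ 2 * c t = c t / Dv ^ 2 by ring,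
        show c t / c ktilde * xtilde = c t * xtilde / c ktilde by ring,
        div_le_div_iff₀ hDsqpos hck]
      linarith [mul_le_mul_of_nonneg_left hmaster hct.le]
    · push_neg at htk
      rw [hq_high t htk]
      have hle : c t ≤ c tstar := hcm t tstar h1 h2 htK
      rw [hlamdef, show (1:ℝ) / Dv ^ 2 * c t = c t / Dv ^ 2 by ring, div_le_one hDsqpos]
      linarith
  have hbr1 : ∀ A' : ℕ → ℝ, (∀ t ∈ Finset.Icc 1 K, 0 < A' t ∧ A' t ≤ 1) →
      (∑ t ∈ Finset.Icc 1 K, π t * c t * A' t ≤ Bbar) →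
      (∑ t ∈ Finset.Icc 1 K, π t * q t / A t) ≤ ∑ t ∈ Finset.Icc 1 K, π t * q t / A' t := by
    intro A' hA'b hA'budget
    have ptwise : ∀ t ∈ Finset.Icc 1 K,
        π t * q t / A t + lam * (π t * c t * A t)
          ≤ π t * q t / A' t + lam * (π t * c t * A' t) := by
      intro t ht
      rw [Finset.mem_Icc] at ht
      obtain ⟨ha'0, ha'1⟩ := hA'b t (Finset.mem_Icc.2 ht)
      have hp : 0 < π t := hppos t ht.1 ht.2
      have hct : 0 < c t := hcpos t ht.1 ht.2
      by_cases htt : t ≤ tstar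
      · rw [hA_low t htt, div_one, mul_one]
        have hq0 : lam * c t ≤ q t := hkey t ht.1 htt
        have hq0' : 0 ≤ q t := (hqb t ht.1 ht.2).1
        have huge : q t ≤ q t / A' t := by
          rw [le_div_iff₀ ha'0]
          calc q t * A' t ≤ q t * 1 := mul_le_mul_of_nonneg_left ha'1 hq0'
            _ = q t := mul_one _
        have hstar : 0 ≤ (1 - A' t) * (q t / A' t - lam * c t) :=
          mul_nonneg (by linarith) (by linarith [hq0.trans huge])
        have hu : q t / A' t * A' t = q t := div_mul_cancel₀ _ ha'0.ne'
        have key : q t + lam * c t ≤ q t / A' t + lam * (c t * A' t) := by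
          linarith [hstar, hu]
        calc π t * q t + lam * (π t * c t) = π t * (q t + lam * c t) := by ring
          _ ≤ π t * (q t / A' t + lam * (c t * A' t)) := mul_le_mul_of_nonneg_left key hp.le
          _ = π t * q t / A' t + lam * (π t * c t * A' t) := by ring
      · push_neg at htt
        rw [hA_high t htt, hq_high t (by omega)]
        have hst : 0 < Real.sqrt (c t) := Real.sqrt_pos.2 hct
        have hcc : Real.sqrt (c t) * Real.sqrt (c t) = c t := Real.mul_self_sqrt hct.le
        set s : ℝ := Real.sqrt (c t) with hsdef
        have key : 1 / (1 / s * Dv) + lam * (c t * (1 / s * Dv))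
            ≤ 1 / A' t + lam * (c t * A' t) := by
          have e1 : 1 / (1 / s * Dv) = s / Dv := by
            field_simp
          have e2 : lam * (c t * (1 / s * Dv)) = s / Dv := by
            rw [hlamdef, ← hcc]
            field_simp
          rw [e1, e2, hlamdef]
          have h1 : s / Dv + s / Dv = (2 * s * (A' t * Dv)) / (A' t * Dv ^ 2) := by
            field_simp
            ring
          have h2 : 1 / A' t + 1 / Dv ^ 2 * (c t * A' t)
              = (Dv ^ 2 + c t * A' t ^ 2) / (A' t * Dv ^ 2) := by
            field_simp
          have hden : (0:ℝ) < A' t * Dv ^ 2 := by positivity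
          rw [h1, h2, div_le_div_iff_of_pos_right hden, ← hcc]
          exact aux_amgm s Dv (A' t)
        calc π t * 1 / (1 / s * Dv) + lam * (π t * c t * (1 / s * Dv))
            = π t * (1 / (1 / s * Dv) + lam * (c t * (1 / s * Dv))) := by ring
          _ ≤ π t * (1 / A' t + lam * (c t * A' t)) := mul_le_mul_of_nonneg_left key hp.le
          _ = π t * 1 / A' t + lam * (π t * c t * A' t) := by ring
    have hsum := Finset.sum_le_sum ptwise
    rw [Finset.sum_add_distrib, Finset.sum_add_distrib, ← Finset.mul_sum, ← Finset.mul_sum,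
      hbudget] at hsum
    have hfin : lam * (∑ t ∈ Finset.Icc 1 K, π t * c t * A' t) ≤ lam * Bbar :=
      mul_le_mul_of_nonneg_left hA'budget hlampos.le
    linarith
  have hM : ∑ t ∈ Finset.Icc 1 K, π t * q t = 1 / 2 := by
    rw [hsplit (fun t => π t * q t) ktilde hktK]
    have hRk := hR ktilde (Finset.mem_Icc.2 ⟨hkt1, hktK⟩) xtilde hxtilde_mem
    rw [hxtilde_eq] at hRk
    have e1 : ∑ t ∈ Finset.Icc 1 ktilde, π t * q t
        = ∑ t ∈ Finset.Icc 1 ktilde, π t * c t * xtilde / c ktilde := by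
      refine Finset.sum_congr rfl (fun t ht => ?_)
      rw [Finset.mem_Icc] at ht
      rw [hq_low t ht.2]
      ring
    have e2 : ∑ t ∈ Finset.Icc (ktilde + 1) K, π t * q t
        = ∑ t ∈ Finset.Icc (ktilde + 1) K, π t := by
      refine Finset.sum_congr rfl (fun t ht => ?_)
      rw [Finset.mem_Icc] at ht
      rw [hq_high t (by omega), mul_one]
    rw [e1, e2]
    linarith
  refine ⟨⟨Finset.mem_Icc.2 ⟨ht1, htK⟩, htP.2, hmax, hkt_le_t, htltK⟩, ?_, ?_, hbudget, ?_, ?_, ?_⟩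
  · intro t ht
    rw [Finset.mem_Icc] at ht
    exact hAb t ht.1 ht.2
  · intro s hs t ht hst
    rw [Finset.mem_Icc] at hs ht
    exact hAmono s hs.1 hs.2 t ht.1 ht.2 hst
  · intro t ht
    rw [Finset.mem_Icc] at ht
    exact Set.mem_Icc.2 (hqb t ht.1 ht.2)
  · intro A' h1 h2
    have := hbr1 A' h1 h2
    linarith
  · intro q' hq'
    have ptw : ∀ t ∈ Finset.Icc 1 K,
        π t * q' t / A t ≤ π t * q t / A t + (π t * q' t - π t * q t) := by
      intro t ht
      have htm := ht
      rw [Finset.mem_Icc] at htm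
      have hp := hppos t htm.1 htm.2
      obtain ⟨hq'0, hq'1⟩ := (hq' t ht : q' t ∈ Set.Icc (0:ℝ) 1)
      by_cases htk : t ≤ ktilde
      · rw [hA_low t (le_trans htk hkt_le_t), div_one, div_one]
        linarith
      · push_neg at htk
        rw [hq_high t htk]
        obtain ⟨hA0, hA1⟩ := hAb t htm.1 htm.2
        have hu : 1 ≤ 1 / A t := one_le_one_div hA0 hA1
        rw [div_eq_mul_one_div (π t * q' t) (A t), div_eq_mul_one_div (π t * 1) (A t)]
        linarith [mul_nonneg (mul_nonneg hp.le (sub_nonneg.2 hq'1)) (sub_nonneg.2 hu)]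
    have hsum2 := Finset.sum_le_sum ptw
    rw [Finset.sum_add_distrib, Finset.sum_sub_distrib, hM] at hsum2
    rw [hM]
    have hsq := sq_nonneg ((∑ t ∈ Finset.Icc 1 K, π t * q' t) - 1 / 2)
    have h14 : ((1:ℝ) / 2) ^ 2 = 1 / 4 := by norm_num
    rw [h14]
    linarith [hsq, hsum2]
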